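/- For any finite nonempty set V ⊆ EuclideanSpace ℝ (Fin m) and any index i ∈ Fin m, the i-th standard basis vector e_i (which has i-th coordinate 1 and all other coordinates 0, hence lies in the weight simplex W_m) is a corner weight of V. -/

import Mathlib

open scoped RealInnerProductSpace

/-- The scalarized value function `g_V(w) = max_{v ∈ V} ⟪v, w⟫`. -/
noncomputable def gVal {m : ℕ} (V : Set (EuclideanSpace ℝ (Fin m)))
    (w : EuclideanSpace ℝ (Fin m)) : ℝ :=
  sSup ((fun v => ⟪v, w⟫) '' V)

/-- The weight simplex `W_m`. -/
def weightSimplex (m : ℕ) : Set (EuclideanSpace ℝ (Fin m)) :=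
  {w | (∀ i, 0 ≤ w i) ∧ ∑ i, w i = 1}

/-- The polyhedron `P(V)` whose vertices give the corner weights of `V`. -/
def cornerPolyhedron {m : ℕ} (V : Set (EuclideanSpace ℝ (Fin m))) :
    Set (EuclideanSpace ℝ (Fin m) × ℝ) :=
  {x | x.1 ∈ weightSimplex m ∧ ∀ v ∈ V, ⟪v, x.1⟫ ≤ x.2}

/-- `w` is a corner weight of `V` if `w` is in the weight simplex and
`(w, g_V(w))` is an extreme point of the polyhedron `P(V)`. -/
def IsCornerWeight {m : ℕ} (V : Set (EuclideanSpace ℝ (Fin m)))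
    (w : EuclideanSpace ℝ (Fin m)) : Prop :=
  w ∈ weightSimplex m ∧ (w, gVal V w) ∈ (cornerPolyhedron V).extremePoints ℝ

/-- Every extremum weight (standard basis vector of the simplex) is a corner weight. -/
theorem extremum_weight_isCornerWeight {m : ℕ} (V : Set (EuclideanSpace ℝ (Fin m)))
    (hVfin : V.Finite) (hVne : V.Nonempty) (i : Fin m) :
    IsCornerWeight V (EuclideanSpace.single i (1 : ℝ)) := by
  classical
  set e : EuclideanSpace ℝ (Fin m) := EuclideanSpace.single i (1 : ℝ) with he
  have heS : e ∈ weightSimplex m := by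
    constructor
    · intro j
      by_cases h : j = i <;> simp [he, EuclideanSpace.single_apply, h]
    · simp [he, EuclideanSpace.single_apply]
  have hbdd : BddAbove ((fun v => ⟪v, e⟫) '' V) := (hVfin.image _).bddAbove
  have hne : ((fun v => ⟪v, e⟫) '' V).Nonempty := hVne.image _
  have hmem : (e, gVal V e) ∈ cornerPolyhedron V :=
    ⟨heS, fun v hv => le_csSup hbdd ⟨v, hv, rfl⟩⟩
  refine ⟨heS, hmem, ?_⟩
  rintro x1 hx1 x2 hx2 ⟨a, b, ha, hb, hab, hsum⟩
  have h1 : a • x1.1 + b • x2.1 = e := congrArg Prod.fst hsum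
  have h2 : a * x1.2 + b * x2.2 = gVal V e := congrArg Prod.snd hsum
  -- coordinates off i are zero
  have hzero : ∀ j, j ≠ i → x1.1 j = 0 ∧ x2.1 j = 0 := by
    intro j hj
    have hcoord : a * x1.1 j + b * x2.1 j = 0 := by
      have := congrFun (congrArg (fun w : EuclideanSpace ℝ (Fin m) => (w : Fin m → ℝ)) h1) j
      simpa [he, EuclideanSpace.single_apply, hj] using this
    have h1j : 0 ≤ x1.1 j := hx1.1.1 j
    have h2j : 0 ≤ x2.1 j := hx2.1.1 j
    have ha1 : 0 ≤ a * x1.1 j := mul_nonneg ha.le h1j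
    have hb2 : 0 ≤ b * x2.1 j := mul_nonneg hb.le h2j
    have hA : a * x1.1 j = 0 := by linarith
    have hB : b * x2.1 j = 0 := by linarith
    exact ⟨by
      rcases mul_eq_zero.1 hA with h | h
      · exact absurd h ha.ne'
      · exact h, by
      rcases mul_eq_zero.1 hB with h | h
      · exact absurd h hb.ne'
      · exact h⟩
  have hx1e : x1.1 = e := by
    have hsum1 : ∑ j, x1.1 j = 1 := hx1.1.2
    have hi : x1.1 i = 1 := by
      rw [← hsum1, Finset.sum_eq_single i]
      · intro j _ hj; exact (hzero j hj).1
      · intro h; exact absurd (Finset.mem_univ i) h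
    ext j
    by_cases h : j = i
    · subst h; simp [he, EuclideanSpace.single_apply, hi]
    · simp [he, EuclideanSpace.single_apply, h, (hzero j h).1]
  have hx2e : x2.1 = e := by
    have hsum2 : ∑ j, x2.1 j = 1 := hx2.1.2
    have hi : x2.1 i = 1 := by
      rw [← hsum2, Finset.sum_eq_single i]
      · intro j _ hj; exact (hzero j hj).2
      · intro h; exact absurd (Finset.mem_univ i) h
    ext j
    by_cases h : j = i
    · subst h; simp [he, EuclideanSpace.single_apply, hi]
    · simp [he, EuclideanSpace.single_apply, h, (hzero j h).2]
  have hge1 : gVal V e ≤ x1.2 := by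
    apply csSup_le hne
    rintro r ⟨v, hv, rfl⟩
    simpa [hx1e] using hx1.2 v hv
  have hge2 : gVal V e ≤ x2.2 := by
    apply csSup_le hne
    rintro r ⟨v, hv, rfl⟩
    simpa [hx2e] using hx2.2 v hv
  have hg : a * gVal V e + b * gVal V e = gVal V e := by rw [← add_mul, hab, one_mul]
  have ht1 : x1.2 = gVal V e := by
    have hle : a * x1.2 ≤ a * gVal V e := by
      have := mul_le_mul_of_nonneg_left hge2 hb.le
      linarith
    exact le_antisymm (le_of_mul_le_mul_left hle ha) hge1
  have ht2 : x2.2 = gVal V e := by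
    have hle : b * x2.2 ≤ b * gVal V e := by
      have := mul_le_mul_of_nonneg_left hge1 ha.le
      linarith
    exact le_antisymm (le_of_mul_le_mul_left hle hb) hge2
  exact Prod.ext hx1e ht1
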